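/- Let q, r ∈ ℝ² and p a point with d(p,q) = d(p,r) = 1, where the unit circles around q and r are internally tangent to a smooth convex curve S⁺ at p from the same side. If the segment qr is not orthogonal to the tangent line of S⁺ at p, then at least one of the open unit disks around q or r contains points of S⁺ other than p. -/

import Mathlib

open Set Metric Pointwise Filter MeasureTheory

/-- A closed tour: a continuous map on `[0,1]` with equal endpoints. -/
def IsClosedTour (T : ℝ → EuclideanSpace ℝ (Fin 2)) : Prop :=
  ContinuousOn T (Set.Icc 0 1) ∧ T 0 = T 1

/-- A tour covers `S` with a radius-`r` cutter if every point of `S`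
is within distance `r` of some point of the tour. -/
def Covers (r : ℝ) (T : ℝ → EuclideanSpace ℝ (Fin 2))
    (S : Set (EuclideanSpace ℝ (Fin 2))) : Prop :=
  ∀ p ∈ S, ∃ t ∈ Set.Icc (0 : ℝ) 1, dist p (T t) ≤ r

/-- The (Euclidean) length of a tour, as total variation on `[0,1]`. -/
noncomputable def tourLength (T : ℝ → EuclideanSpace ℝ (Fin 2)) : ℝ :=
  (eVariationOn T (Set.Icc 0 1)).toReal

/-- The coverage of a tour: the Minkowski sum of its image with the closed `r`-disk. -/
noncomputable def coverage (r : ℝ) (T : ℝ → EuclideanSpace ℝ (Fin 2)) :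
    Set (EuclideanSpace ℝ (Fin 2)) :=
  T '' Set.Icc 0 1 + Metric.closedBall 0 r

/-- The point `(x, y)` in the Euclidean plane. -/
noncomputable def pt (x y : ℝ) : EuclideanSpace ℝ (Fin 2) :=
  (WithLp.equiv 2 (Fin 2 → ℝ)).symm ![x, y]

open scoped InnerProductSpace Topology

lemma aux14 (γ : ℝ → EuclideanSpace ℝ (Fin 2)) (c : EuclideanSpace ℝ (Fin 2))
    (hγ : ContDiff ℝ 1 γ)
    (ha : ⟪γ 0 - c, deriv γ 0⟫_ℝ ≠ 0) (δ : ℝ) (hδ : 0 < δ) :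
    ∃ s : ℝ, |s| < δ ∧ ‖γ s - c‖ < ‖γ 0 - c‖ := by
  set a := ⟪γ 0 - c, deriv γ 0⟫_ℝ with ha_def
  have hdγ : HasDerivAt γ (deriv γ 0) 0 :=
    ((hγ.differentiable one_ne_zero) 0).hasDerivAt
  have h1 : HasDerivAt (fun s => γ s - c) (deriv γ 0) 0 := hdγ.sub_const c
  have hds : HasDerivAt (fun s => ⟪γ s - c, γ s - c⟫_ℝ) (2 * a) 0 := by
    have h2 := h1.inner ℝ h1
    refine h2.congr_deriv ?_
    rw [real_inner_comm (γ 0 - c) (deriv γ 0)]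
    ring
  rw [hasDerivAt_iff_tendsto_slope] at hds
  have key : ∃ s : ℝ, |s| < δ ∧ ⟪γ s - c, γ s - c⟫_ℝ < ⟪γ 0 - c, γ 0 - c⟫_ℝ := by
    rcases lt_or_gt_of_ne ha with hneg | hpos
    · -- a < 0 : take s > 0
      have hev : ∀ᶠ s in 𝓝[≠] (0:ℝ), slope (fun s => ⟪γ s - c, γ s - c⟫_ℝ) 0 s < a :=
        hds.eventually (gt_mem_nhds (by linarith))
      have hev' : ∀ᶠ s in 𝓝[>] (0:ℝ), slope (fun s => ⟪γ s - c, γ s - c⟫_ℝ) 0 s < a :=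
        hev.filter_mono (nhdsWithin_mono 0 (fun x hx => ne_of_gt hx))
      have hmem : Ioo (0:ℝ) δ ∈ 𝓝[>] (0:ℝ) := Ioo_mem_nhdsGT_of_mem ⟨le_rfl, hδ⟩
      rcases (hev'.and (eventually_of_mem hmem (fun x hx => hx))).exists with ⟨s, hs1, hs2⟩
      refine ⟨s, by rw [abs_of_pos hs2.1]; exact hs2.2, ?_⟩
      have hsl : slope (fun s => ⟪γ s - c, γ s - c⟫_ℝ) 0 s
          = (⟪γ s - c, γ s - c⟫_ℝ - ⟪γ 0 - c, γ 0 - c⟫_ℝ) / s := by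
        simp [slope_def_field, div_eq_iff (ne_of_gt hs2.1)]
      rw [hsl] at hs1
      have := (div_lt_iff₀ hs2.1).mp hs1
      nlinarith [mul_neg_of_neg_of_pos hneg hs2.1]
    · -- a > 0 : take s < 0
      have hev : ∀ᶠ s in 𝓝[≠] (0:ℝ), a < slope (fun s => ⟪γ s - c, γ s - c⟫_ℝ) 0 s :=
        hds.eventually (lt_mem_nhds (by linarith))
      have hev' : ∀ᶠ s in 𝓝[<] (0:ℝ), a < slope (fun s => ⟪γ s - c, γ s - c⟫_ℝ) 0 s :=
        hev.filter_mono (nhdsWithin_mono 0 (fun x hx => ne_of_lt hx))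
      have hmem : Ioo (-δ) (0:ℝ) ∈ 𝓝[<] (0:ℝ) := Ioo_mem_nhdsLT_of_mem ⟨by linarith, le_rfl⟩
      rcases (hev'.and (eventually_of_mem hmem (fun x hx => hx))).exists with ⟨s, hs1, hs2⟩
      refine ⟨s, by rw [abs_of_neg hs2.2]; linarith [hs2.1], ?_⟩
      have hsl : slope (fun s => ⟪γ s - c, γ s - c⟫_ℝ) 0 s
          = (⟪γ s - c, γ s - c⟫_ℝ - ⟪γ 0 - c, γ 0 - c⟫_ℝ) / s := by
        simp [slope_def_field, div_eq_iff (ne_of_lt hs2.2)]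
      rw [hsl] at hs1
      have := (lt_div_iff_of_neg hs2.2).mp hs1
      nlinarith [mul_neg_of_pos_of_neg hpos hs2.2]
  rcases key with ⟨s, hs, hlt⟩
  refine ⟨s, hs, ?_⟩
  rw [real_inner_self_eq_norm_sq, real_inner_self_eq_norm_sq] at hlt
  nlinarith [norm_nonneg (γ s - c), norm_nonneg (γ 0 - c)]


/-- let `γ` be a smooth curve (`S⁺`) through `p = γ 0` with
nonvanishing tangent, and let `q`, `w` be at distance `1` from `p` (centers of
unit circles through `p`). If the segment `q w` is not orthogonal to the
tangent of the curve at `p`, then at least one of the open unit disks around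
`q` or `w` contains points of the curve other than `p`, arbitrarily close
to `p`. -/
theorem stmt14 (γ : ℝ → EuclideanSpace ℝ (Fin 2))
    (p q w : EuclideanSpace ℝ (Fin 2))
    (hγ : ContDiff ℝ 1 γ) (hp : γ 0 = p) (htang : deriv γ 0 ≠ 0)
    (hq : dist p q = 1) (hw : dist p w = 1)
    (hnotorth : ⟪w - q, deriv γ 0⟫_ℝ ≠ 0) :
    ∀ δ > 0, ∃ s : ℝ, |s| < δ ∧ γ s ≠ p ∧
      (dist (γ s) q < 1 ∨ dist (γ s) w < 1) := by
  intro δ hδ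
  have hsum : ⟪p - q, deriv γ 0⟫_ℝ - ⟪p - w, deriv γ 0⟫_ℝ = ⟪w - q, deriv γ 0⟫_ℝ := by
    rw [← inner_sub_left]
    congr 1
    abel
  have hcase : ⟪p - q, deriv γ 0⟫_ℝ ≠ 0 ∨ ⟪p - w, deriv γ 0⟫_ℝ ≠ 0 := by
    by_contra h
    push_neg at h
    rw [h.1, h.2] at hsum
    exact hnotorth (by linarith)
  rcases hcase with h | h
  · obtain ⟨s, hs, hlt⟩ := aux14 γ q hγ (by rwa [hp]) δ hδ
    rw [hp, ← dist_eq_norm, ← dist_eq_norm, hq] at hlt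
    refine ⟨s, hs, fun hc => by rw [hc, hq] at hlt; exact lt_irrefl 1 hlt, Or.inl hlt⟩
  · obtain ⟨s, hs, hlt⟩ := aux14 γ w hγ (by rwa [hp]) δ hδ
    rw [hp, ← dist_eq_norm, ← dist_eq_norm, hw] at hlt
    refine ⟨s, hs, fun hc => by rw [hc, hw] at hlt; exact lt_irrefl 1 hlt, Or.inr hlt⟩
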